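/- Let d₁, d₂ ∈ [−1,1], let U, V ∈ SO(2), and let S = V·diag(d₁,d₂)·U. Assume the two columns of S are not orthogonal, i.e., ⟨S e₁, S e₂⟩ ≠ 0. Then for every Q ∈ SO(2), h₂((1+(Q·S)₁₁)/2) + h₂((1+(Q·S)₂₂)/2) > h₂((1+d₁)/2) + h₂((1+d₂)/2). -/
import Mathlib


/-- Binary entropy function (base-2 logarithm), with the convention `0 * log 0 = 0`. -/
noncomputable def h2 (p : ℝ) : ℝ := -(p * Real.logb 2 p) - (1 - p) * Real.logb 2 (1 - p)

/-- `M` is a real 2×2 special orthogonal matrix. -/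
def SO2 (M : Matrix (Fin 2) (Fin 2) ℝ) : Prop := M.transpose * M = 1 ∧ M.det = 1

lemma h2_eq (p : ℝ) : h2 p = Real.binEntropy p / Real.log 2 := by
  simp [h2, Real.binEntropy, Real.logb, Real.log_inv]
  ring

lemma h2_strict {x y a b : ℝ} (hx : x ∈ Set.Icc (0:ℝ) 1) (hy : y ∈ Set.Icc (0:ℝ) 1)
    (hxy : x ≠ y) (ha : 0 < a) (hb : 0 < b) (hab : a + b = 1) :
    a * h2 x + b * h2 y < h2 (a*x + b*y) := by
  have hL : (0:ℝ) < Real.log 2 := Real.log_pos (by norm_num)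
  have h := Real.strictConcave_binEntropy.2 hx hy hxy ha hb hab
  simp only [smul_eq_mul] at h
  rw [h2_eq, h2_eq, h2_eq,
    show a * (Real.binEntropy x / Real.log 2) + b * (Real.binEntropy y / Real.log 2)
      = (a * Real.binEntropy x + b * Real.binEntropy y) / Real.log 2 by ring]
  exact div_lt_div_of_pos_right h hL

lemma h2_weak {x y a b : ℝ} (hx : x ∈ Set.Icc (0:ℝ) 1) (hy : y ∈ Set.Icc (0:ℝ) 1)
    (ha : 0 ≤ a) (hb : 0 ≤ b) (hab : a + b = 1) :
    a * h2 x + b * h2 y ≤ h2 (a*x + b*y) := by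
  have hL : (0:ℝ) < Real.log 2 := Real.log_pos (by norm_num)
  have h := Real.strictConcave_binEntropy.concaveOn.2 hx hy ha hb hab
  simp only [smul_eq_mul] at h
  rw [h2_eq, h2_eq, h2_eq,
    show a * (Real.binEntropy x / Real.log 2) + b * (Real.binEntropy y / Real.log 2)
      = (a * Real.binEntropy x + b * Real.binEntropy y) / Real.log 2 by ring]
  gcongr

/-- `fE x = h2 ((1+x)/2)`, an even strictly concave function on `[-1,1]`. -/
noncomputable def fE (x : ℝ) : ℝ := h2 ((1 + x) / 2)

lemma fE_even (x : ℝ) : fE (-x) = fE x := by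
  simp only [fE, h2]
  rw [show ((1 + -x)/2 : ℝ) = (1-x)/2 by ring,
    show (1 - (1-x)/2 : ℝ) = (1+x)/2 by ring,
    show (1 - (1+x)/2 : ℝ) = (1-x)/2 by ring]
  ring

lemma fE_strict {x y a b : ℝ} (hx : x ∈ Set.Icc (-1:ℝ) 1) (hy : y ∈ Set.Icc (-1:ℝ) 1)
    (hxy : x ≠ y) (ha : 0 < a) (hb : 0 < b) (hab : a + b = 1) :
    a * fE x + b * fE y < fE (a*x + b*y) := by
  have h := h2_strict (x := (1+x)/2) (y := (1+y)/2) (a := a) (b := b)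
    ⟨by linarith [hx.1], by linarith [hx.2]⟩ ⟨by linarith [hy.1], by linarith [hy.2]⟩
    (fun h => hxy (by linarith)) ha hb hab
  simp only [fE]
  rw [show (1 + (a*x+b*y))/2 = a*((1+x)/2) + b*((1+y)/2) by linear_combination (-1/2:ℝ) * hab]
  exact h

lemma fE_weak {x y a b : ℝ} (hx : x ∈ Set.Icc (-1:ℝ) 1) (hy : y ∈ Set.Icc (-1:ℝ) 1)
    (ha : 0 ≤ a) (hb : 0 ≤ b) (hab : a + b = 1) :
    a * fE x + b * fE y ≤ fE (a*x + b*y) := by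
  have h := h2_weak (x := (1+x)/2) (y := (1+y)/2) (a := a) (b := b)
    ⟨by linarith [hx.1], by linarith [hx.2]⟩ ⟨by linarith [hy.1], by linarith [hy.2]⟩
    ha hb hab
  simp only [fE]
  rw [show (1 + (a*x+b*y))/2 = a*((1+x)/2) + b*((1+y)/2) by linear_combination (-1/2:ℝ) * hab]
  exact h

lemma core_strict {A m u : ℝ} (hm : m ≠ 0) (hu1 : -1 < u) (hu2 : u < 1)
    (h1 : A + m ∈ Set.Icc (-1:ℝ) 1) (h2 : A - m ∈ Set.Icc (-1:ℝ) 1) :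
    fE (A + m) + fE (A - m) < fE (A + m*u) + fE (A - m*u) := by
  have ha : (0:ℝ) < (1+u)/2 := by linarith
  have hb : (0:ℝ) < (1-u)/2 := by linarith
  have hab : (1+u)/2 + (1-u)/2 = (1:ℝ) := by ring
  have hne : A + m ≠ A - m := fun h => hm (by linarith)
  have g1 := fE_strict h1 h2 hne ha hb hab
  have g2 := fE_strict h2 h1 hne.symm ha hb hab
  rw [show (1+u)/2*(A+m) + (1-u)/2*(A-m) = A + m*u by ring] at g1
  rw [show (1+u)/2*(A-m) + (1-u)/2*(A+m) = A - m*u by ring] at g2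
  linarith

lemma core_weak {A m u : ℝ} (hu1 : -1 ≤ u) (hu2 : u ≤ 1)
    (h1 : A + m ∈ Set.Icc (-1:ℝ) 1) (h2 : A - m ∈ Set.Icc (-1:ℝ) 1) :
    fE (A + m) + fE (A - m) ≤ fE (A + m*u) + fE (A - m*u) := by
  have ha : (0:ℝ) ≤ (1+u)/2 := by linarith
  have hb : (0:ℝ) ≤ (1-u)/2 := by linarith
  have hab : (1+u)/2 + (1-u)/2 = (1:ℝ) := by ring
  have g1 := fE_weak h1 h2 ha hb hab
  have g2 := fE_weak h2 h1 ha hb hab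
  rw [show (1+u)/2*(A+m) + (1-u)/2*(A-m) = A + m*u by ring] at g1
  rw [show (1+u)/2*(A-m) + (1-u)/2*(A+m) = A - m*u by ring] at g2
  linarith

lemma so2_struct {M : Matrix (Fin 2) (Fin 2) ℝ} (h : SO2 M) :
    M 1 1 = M 0 0 ∧ M 0 1 = -(M 1 0) ∧ (M 0 0)^2 + (M 1 0)^2 = 1 := by
  obtain ⟨horth, hdet⟩ := h
  have h00 := congrFun (congrFun horth 0) 0
  have h01 := congrFun (congrFun horth 0) 1
  have h11 := congrFun (congrFun horth 1) 1
  simp [Matrix.mul_apply, Fin.sum_univ_two, Matrix.one_apply] at h00 h01 h11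
  rw [Matrix.det_fin_two] at hdet
  refine ⟨?_, ?_, by nlinarith [h00]⟩
  · linear_combination (M 0 0) * h11 - (M 1 1) * hdet - (M 0 1) * h01
  · linear_combination -(M 0 1) * hdet + (M 1 1) * h01 - (M 1 0) * h11

lemma comb_mem {d1 d2 u v : ℝ} (hd1 : d1 ∈ Set.Icc (-1:ℝ) 1) (hd2 : d2 ∈ Set.Icc (-1:ℝ) 1)
    (hu1 : -1 ≤ u) (hu2 : u ≤ 1) (hv1 : -1 ≤ v) (hv2 : v ≤ 1) :
    ((d1+d2)*u + (d1-d2)*v)/2 ∈ Set.Icc (-1:ℝ) 1 := by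
  have h3 : |(u+v)/2| + |(u-v)/2| ≤ 1 := by
    rcases abs_cases ((u+v)/2) with ⟨e,_⟩|⟨e,_⟩ <;>
      rcases abs_cases ((u-v)/2) with ⟨e2,_⟩|⟨e2,_⟩ <;> rw [e, e2] <;> linarith
  have hd1a : |d1| ≤ 1 := abs_le.mpr ⟨hd1.1, hd1.2⟩
  have hd2a : |d2| ≤ 1 := abs_le.mpr ⟨hd2.1, hd2.2⟩
  have b1 : |d1*((u+v)/2)| ≤ |(u+v)/2| := by
    rw [abs_mul]; exact mul_le_of_le_one_left (abs_nonneg _) hd1a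
  have b2 : |d2*((u-v)/2)| ≤ |(u-v)/2| := by
    rw [abs_mul]; exact mul_le_of_le_one_left (abs_nonneg _) hd2a
  have key : |((d1+d2)*u + (d1-d2)*v)/2| ≤ 1 := by
    rw [show ((d1+d2)*u + (d1-d2)*v)/2 = d1*((u+v)/2) + d2*((u-v)/2) by ring]
    calc |d1*((u+v)/2) + d2*((u-v)/2)| ≤ |d1*((u+v)/2)| + |d2*((u-v)/2)| := abs_add_le _ _
      _ ≤ 1 := by linarith
  exact ⟨(abs_le.mp key).1, (abs_le.mp key).2⟩

lemma final_core {d1 d2 u v : ℝ} (hd1 : d1 ∈ Set.Icc (-1:ℝ) 1) (hd2 : d2 ∈ Set.Icc (-1:ℝ) 1)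
    (hu : u^2 ≤ 1) (hv : v^2 ≤ 1) (hcase : u^2 < 1 ∨ v^2 < 1)
    (hs : d1 + d2 ≠ 0) (ht : d1 - d2 ≠ 0) :
    fE d1 + fE d2 < fE (((d1+d2)*u + (d1-d2)*v)/2) + fE (((d1+d2)*u - (d1-d2)*v)/2) := by
  have hu1 : -1 ≤ u := by nlinarith
  have hu2 : u ≤ 1 := by nlinarith
  have hv1 : -1 ≤ v := by nlinarith
  have hv2 : v ≤ 1 := by nlinarith
  -- memberships
  have mQ1 : (d1+d2)/2 + (d1-d2)/2*v ∈ Set.Icc (-1:ℝ) 1 := by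
    have := comb_mem hd1 hd2 (by norm_num : (-1:ℝ) ≤ 1) le_rfl hv1 hv2
    rwa [show ((d1+d2)*1 + (d1-d2)*v)/2 = (d1+d2)/2 + (d1-d2)/2*v by ring] at this
  have mQ2 : (d1+d2)/2 - (d1-d2)/2*v ∈ Set.Icc (-1:ℝ) 1 := by
    have := comb_mem hd1 hd2 (by norm_num : (-1:ℝ) ≤ 1) le_rfl (by linarith : (-1:ℝ) ≤ -v) (by linarith)
    rwa [show ((d1+d2)*1 + (d1-d2)*(-v))/2 = (d1+d2)/2 - (d1-d2)/2*v by ring] at this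
  have mQ2' : (d1-d2)*v/2 - (d1+d2)/2 ∈ Set.Icc (-1:ℝ) 1 := by
    have := comb_mem hd1 hd2 (by norm_num : (-1:ℝ) ≤ -1) (by norm_num) hv1 hv2
    rwa [show ((d1+d2)*(-1) + (d1-d2)*v)/2 = (d1-d2)*v/2 - (d1+d2)/2 by ring] at this
  have mQ1' : (d1-d2)*v/2 + (d1+d2)/2 ∈ Set.Icc (-1:ℝ) 1 := by
    rwa [show (d1-d2)*v/2 + (d1+d2)/2 = (d1+d2)/2 + (d1-d2)/2*v by ring]
  -- step B endpoints
  have hmem1 : (d1+d2)/2 + (d1-d2)/2 ∈ Set.Icc (-1:ℝ) 1 := by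
    rwa [show (d1+d2)/2 + (d1-d2)/2 = d1 by ring]
  have hmem2 : (d1+d2)/2 - (d1-d2)/2 ∈ Set.Icc (-1:ℝ) 1 := by
    rwa [show (d1+d2)/2 - (d1-d2)/2 = d2 by ring]
  rcases hcase with hus | hvs
  · -- strict in step A (u), weak in step B (v)
    have wB := core_weak (A := (d1+d2)/2) (m := (d1-d2)/2) hv1 hv2 hmem1 hmem2
    rw [show (d1+d2)/2 + (d1-d2)/2 = d1 by ring, show (d1+d2)/2 - (d1-d2)/2 = d2 by ring] at wB
    have hu1' : -1 < u := by nlinarith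
    have hu2' : u < 1 := by nlinarith
    have sA := core_strict (A := (d1-d2)*v/2) (m := (d1+d2)/2)
      (by intro h; exact hs (by linarith)) hu1' hu2' mQ1' mQ2'
    rw [show (d1-d2)*v/2 + (d1+d2)/2 = (d1+d2)/2 + (d1-d2)/2*v by ring,
      show (d1-d2)*v/2 - (d1+d2)/2 = -((d1+d2)/2 - (d1-d2)/2*v) by ring, fE_even,
      show (d1-d2)*v/2 + (d1+d2)/2*u = ((d1+d2)*u + (d1-d2)*v)/2 by ring,
      show (d1-d2)*v/2 - (d1+d2)/2*u = -(((d1+d2)*u - (d1-d2)*v)/2) by ring, fE_even] at sA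
    rw [show (d1+d2)/2 + (d1-d2)/2*v = (d1+d2)/2 + (d1-d2)/2*v by ring] at wB
    linarith
  · -- weak in step A (u), strict in step B (v)
    have hv1' : -1 < v := by nlinarith
    have hv2' : v < 1 := by nlinarith
    have sB := core_strict (A := (d1+d2)/2) (m := (d1-d2)/2)
      (by intro h; exact ht (by linarith)) hv1' hv2' hmem1 hmem2
    rw [show (d1+d2)/2 + (d1-d2)/2 = d1 by ring, show (d1+d2)/2 - (d1-d2)/2 = d2 by ring] at sB
    have wA := core_weak (A := (d1-d2)*v/2) (m := (d1+d2)/2) hu1 hu2 mQ1' mQ2'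
    rw [show (d1-d2)*v/2 + (d1+d2)/2 = (d1+d2)/2 + (d1-d2)/2*v by ring,
      show (d1-d2)*v/2 - (d1+d2)/2 = -((d1+d2)/2 - (d1-d2)/2*v) by ring, fE_even,
      show (d1-d2)*v/2 + (d1+d2)/2*u = ((d1+d2)*u + (d1-d2)*v)/2 by ring,
      show (d1-d2)*v/2 - (d1+d2)/2*u = -(((d1+d2)*u - (d1-d2)*v)/2) by ring, fE_even] at wA
    linarith

lemma so2_mul {A B : Matrix (Fin 2) (Fin 2) ℝ} (hA : SO2 A) (hB : SO2 B) : SO2 (A * B) := by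
  constructor
  · rw [Matrix.transpose_mul, Matrix.mul_assoc, ← Matrix.mul_assoc A.transpose, hA.1,
      Matrix.one_mul, hB.1]
  · rw [Matrix.det_mul, hA.2, hB.2, one_mul]

lemma main_core {d1 d2 A B p q : ℝ} (hd1 : d1 ∈ Set.Icc (-1:ℝ) 1) (hd2 : d2 ∈ Set.Icc (-1:ℝ) 1)
    (hWp : A^2 + B^2 = 1) (hUp : p^2 + q^2 = 1) (hkey : p*q*(d2^2 - d1^2) ≠ 0) :
    fE d1 + fE d2 < fE (d1*A*p - d2*B*q) + fE (d2*A*p - d1*B*q) := by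
  have hp0 : p ≠ 0 := fun h => hkey (by rw [h]; ring)
  have hq0 : q ≠ 0 := fun h => hkey (by rw [h]; ring)
  have hdd : d2^2 - d1^2 ≠ 0 := fun h => hkey (by rw [h]; ring)
  have hs : d1 + d2 ≠ 0 := fun h => hdd (by linear_combination (d2 - d1) * h)
  have ht : d1 - d2 ≠ 0 := fun h => hdd (by linear_combination (-(d2 + d1)) * h)
  have hu : (A*p - B*q)^2 ≤ 1 := by nlinarith [sq_nonneg (A*q + B*p)]
  have hv : (A*p + B*q)^2 ≤ 1 := by nlinarith [sq_nonneg (A*q - B*p)]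
  have hp2 : 0 < p^2 := lt_of_le_of_ne (sq_nonneg p) (Ne.symm (pow_ne_zero 2 hp0))
  have hq2 : 0 < q^2 := lt_of_le_of_ne (sq_nonneg q) (Ne.symm (pow_ne_zero 2 hq0))
  have hcase : (A*p - B*q)^2 < 1 ∨ (A*p + B*q)^2 < 1 := by
    by_contra hcon
    push_neg at hcon
    obtain ⟨c1, c2⟩ := hcon
    have e3 : (A*p - B*q)^2 = 1 := le_antisymm hu c1
    have e4 : (A*p + B*q)^2 = 1 := le_antisymm hv c2
    have key : A^2*q^2 + B^2*p^2 = 0 := by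
      linear_combination (p^2+q^2)*hWp + hUp - e3/2 - e4/2
    have h5 : A^2*q^2 = 0 :=
      le_antisymm (by linarith [mul_nonneg (sq_nonneg B) (sq_nonneg p)])
        (mul_nonneg (sq_nonneg A) (sq_nonneg q))
    have h6 : B^2*p^2 = 0 :=
      le_antisymm (by linarith [mul_nonneg (sq_nonneg A) (sq_nonneg q)])
        (mul_nonneg (sq_nonneg B) (sq_nonneg p))
    have ha2 : A^2 = 0 := by
      rcases mul_eq_zero.mp h5 with h | h
      · exact h
      · exact absurd h (ne_of_gt hq2)
    have hb2 : B^2 = 0 := by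
      rcases mul_eq_zero.mp h6 with h | h
      · exact h
      · exact absurd h (ne_of_gt hp2)
    linarith
  rw [show d1*A*p - d2*B*q
      = ((d1+d2)*(A*p - B*q) + (d1-d2)*(A*p + B*q))/2 by ring,
    show d2*A*p - d1*B*q
      = ((d1+d2)*(A*p - B*q) - (d1-d2)*(A*p + B*q))/2 by ring]
  exact final_core hd1 hd2 hu hv hcase hs ht

theorem stmt11 (d1 d2 : ℝ) (hd1 : d1 ∈ Set.Icc (-1 : ℝ) 1) (hd2 : d2 ∈ Set.Icc (-1 : ℝ) 1)
    (U V : Matrix (Fin 2) (Fin 2) ℝ) (hU : SO2 U) (hV : SO2 V)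
    (S : Matrix (Fin 2) (Fin 2) ℝ)
    (hS : S = V * Matrix.diagonal ![d1, d2] * U)
    (hne : S 0 0 * S 0 1 + S 1 0 * S 1 1 ≠ 0) :
    ∀ Q, SO2 Q →
      h2 ((1 + d1) / 2) + h2 ((1 + d2) / 2) <
        h2 ((1 + (Q * S) 0 0) / 2) + h2 ((1 + (Q * S) 1 1) / 2) := by
  intro Q hQ
  obtain ⟨hU11, hU01, hUp⟩ := so2_struct hU
  obtain ⟨hV11, hV01, hVp⟩ := so2_struct hV
  obtain ⟨hW11, hW01, hWp⟩ := so2_struct (so2_mul hQ hV)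
  -- S entries
  have eS00 : S 0 0 = V 0 0 * d1 * U 0 0 + V 0 1 * d2 * U 1 0 := by
    rw [hS]; simp [Matrix.mul_apply, Fin.sum_univ_two, Matrix.diagonal]
  have eS01 : S 0 1 = V 0 0 * d1 * U 0 1 + V 0 1 * d2 * U 1 1 := by
    rw [hS]; simp [Matrix.mul_apply, Fin.sum_univ_two, Matrix.diagonal]
  have eS10 : S 1 0 = V 1 0 * d1 * U 0 0 + V 1 1 * d2 * U 1 0 := by
    rw [hS]; simp [Matrix.mul_apply, Fin.sum_univ_two, Matrix.diagonal]
  have eS11 : S 1 1 = V 1 0 * d1 * U 0 1 + V 1 1 * d2 * U 1 1 := by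
    rw [hS]; simp [Matrix.mul_apply, Fin.sum_univ_two, Matrix.diagonal]
  rw [eS00, eS01, eS10, eS11, hV01, hV11, hU01, hU11] at hne
  have hkey : U 0 0 * U 1 0 * (d2^2 - d1^2) ≠ 0 := by
    intro h
    apply hne
    linear_combination (U 0 0 * U 1 0 * (d2^2 - d1^2)) * hVp + h
  -- (Q*S) entries
  have q00 : (Q * S) 0 0 = (Q*V) 0 0 * d1 * U 0 0 + (Q*V) 0 1 * d2 * U 1 0 := by
    rw [hS, ← Matrix.mul_assoc, ← Matrix.mul_assoc]
    simp [Matrix.mul_apply, Fin.sum_univ_two, Matrix.diagonal]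
  have q11 : (Q * S) 1 1 = (Q*V) 1 0 * d1 * U 0 1 + (Q*V) 1 1 * d2 * U 1 1 := by
    rw [hS, ← Matrix.mul_assoc, ← Matrix.mul_assoc]
    simp [Matrix.mul_apply, Fin.sum_univ_two, Matrix.diagonal]
  have e00 : (Q * S) 0 0 = d1 * ((Q*V) 0 0) * (U 0 0) - d2 * ((Q*V) 1 0) * (U 1 0) := by
    rw [q00, hW01]; ring
  have e11 : (Q * S) 1 1 = d2 * ((Q*V) 0 0) * (U 0 0) - d1 * ((Q*V) 1 0) * (U 1 0) := by
    rw [q11, hU01, hU11, hW11]; ring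
  rw [e00, e11]
  exact main_core hd1 hd2 hWp hUp hkey
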